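/- Let the learning problem be convex and differentiable with nonempty solution set Θ* satisfying the weak sharpness property, let Θ be bounded, and let the steplengths γ_{g,k} be nonnegative and diminishing with Σ_k γ_{g,k} = ∞ and Σ_k γ_{g,k}² < ∞. Then the sequence θ_{k+1} = Π_Θ(θ_k − γ_{g,k} ∇_θ g(θ_k)) satisfies Σ_{k=1}^∞ γ_{g,k} · dist(θ_k, Θ*) < ∞. -/

import Mathlib

open Filter Topology RealInnerProductSpace Metric

/-- Gradient inequality for a convex function: `⟪∇g x, y - x⟫ ≤ g y - g x`. -/
lemma aux_grad_ineq {m : ℕ} {g : EuclideanSpace ℝ (Fin m) → ℝ}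
    {v x y : EuclideanSpace ℝ (Fin m)}
    (hgconv : ConvexOn ℝ Set.univ g) (hx : HasGradientAt g v x) :
    ⟪v, y - x⟫ ≤ g y - g x := by
  set φ : ℝ → ℝ := fun t => g (x + t • (y - x)) with hφ
  have hφconv : ConvexOn ℝ Set.univ φ := by
    refine ⟨convex_univ, ?_⟩
    intro a _ b _ s t hs ht hst
    have hpt : x + (s*a + t*b) • (y - x)
        = s • (x + a • (y - x)) + t • (x + b • (y - x)) := by
      calc x + (s*a + t*b) • (y - x)
          = (s+t) • x + (s*a + t*b) • (y - x) := by rw [hst, one_smul]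
        _ = s • (x + a • (y - x)) + t • (x + b • (y - x)) := by module
    have := hgconv.2 (Set.mem_univ (x + a • (y - x))) (Set.mem_univ (x + b • (y - x)))
      hs ht hst
    simpa [φ, smul_eq_mul, hpt] using this
  have hderiv : HasDerivAt φ ⟪v, y - x⟫ 0 := by
    have hline : HasDerivAt (fun t : ℝ => x + t • (y - x)) (y - x) 0 := by
      simpa using ((hasDerivAt_id (0:ℝ)).smul_const (y - x)).const_add x
    have hfd : HasFDerivAt g ((InnerProductSpace.toDual ℝ (EuclideanSpace ℝ (Fin m))) v) ((fun t : ℝ => x + t • (y - x)) 0) := by simpa using hx.hasFDerivAt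
    have := hfd.comp_hasDerivAt 0 hline
    simp at this; exact this
  have hslope := hφconv.le_slope_of_hasDerivAt (Set.mem_univ 0) (Set.mem_univ 1)
    zero_lt_one hderiv
  have hs : slope φ 0 1 = g y - g x := by
    simp [slope_def_field, φ]
  rw [hs] at hslope
  exact hslope

theorem stmt_6
    {m : ℕ}
    (Θ : Set (EuclideanSpace ℝ (Fin m)))
    (hΘne : Θ.Nonempty) (hΘcl : IsClosed Θ) (hΘcv : Convex ℝ Θ)
    (hΘbdd : Bornology.IsBounded Θ)
    (g : EuclideanSpace ℝ (Fin m) → ℝ)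
    (gradg : EuclideanSpace ℝ (Fin m) → EuclideanSpace ℝ (Fin m))
    -- continuous differentiability and convexity of g
    (hgdiff : ∀ ϑ, HasGradientAt g (gradg ϑ) ϑ)
    (hggradcont : Continuous gradg)
    (hgconv : ConvexOn ℝ Set.univ g)
    -- the gradient of g is bounded on Θ
    (Cg : ℝ) (hgradbdd : ∀ ϑ ∈ Θ, ‖gradg ϑ‖ ≤ Cg)
    -- the solution set Θ*, nonempty and weakly sharp
    (Θstar : Set (EuclideanSpace ℝ (Fin m)))
    (hΘstar : Θstar = {ϑ | ϑ ∈ Θ ∧ ∀ ϑ' ∈ Θ, g ϑ ≤ g ϑ'})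
    (hΘstarne : Θstar.Nonempty)
    (α : ℝ) (hα : 0 < α)
    (hws : ∀ ϑ ∈ Θ, ∀ ϑ' ∈ Θstar, α * infDist ϑ Θstar ≤ g ϑ - g ϑ')
    -- Euclidean projection onto Θ
    (PΘ : EuclideanSpace ℝ (Fin m) → EuclideanSpace ℝ (Fin m))
    (hPΘ : ∀ y, PΘ y ∈ Θ ∧ ∀ z ∈ Θ, ‖y - PΘ y‖ ≤ ‖y - z‖)
    -- diminishing steplengths
    (γg : ℕ → ℝ) (hγgnn : ∀ k, 0 ≤ γg k)
    (hγgdim : Tendsto γg atTop (𝓝 0))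
    (hγgdiv : Tendsto (fun K => ∑ k ∈ Finset.range K, γg k) atTop atTop)
    (hγgsq : Summable (fun k => (γg k) ^ 2))
    -- the projected gradient iterates
    (θ : ℕ → EuclideanSpace ℝ (Fin m)) (hθ0 : θ 0 ∈ Θ)
    (hθit : ∀ k, θ (k + 1) = PΘ (θ k - γg k • gradg (θ k))) :
    Summable (fun k => γg k * infDist (θ k) Θstar) := by
  -- the projection is nonexpansive towards points of Θ
  have hproj : ∀ y, ∀ z ∈ Θ, ‖PΘ y - z‖ ≤ ‖y - z‖ := by
    intro y z hz
    have hpy := (hPΘ y).1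
    have hmin := (hPΘ y).2
    haveI : Nonempty Θ := ⟨⟨PΘ y, hpy⟩⟩
    have hinf : ‖y - PΘ y‖ = ⨅ w : Θ, ‖y - w‖ := by
      apply le_antisymm
      · exact le_ciInf fun w => hmin w w.2
      · exact ciInf_le ⟨0, fun r ⟨w, hw⟩ => hw ▸ norm_nonneg _⟩ (⟨PΘ y, hpy⟩ : Θ)
    have hvar := (norm_eq_iInf_iff_real_inner_le_zero hΘcv hpy).mp hinf z hz
    have hexp : ‖y - z‖ ^ 2 = ‖y - PΘ y‖ ^ 2 + 2 * ⟪y - PΘ y, PΘ y - z⟫ + ‖PΘ y - z‖ ^ 2 := by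
      have h : y - z = (y - PΘ y) + (PΘ y - z) := by abel
      rw [h, norm_add_sq_real]
    have h1 : 0 ≤ ⟪y - PΘ y, PΘ y - z⟫ := by
      have h : ⟪y - PΘ y, PΘ y - z⟫ = - ⟪y - PΘ y, z - PΘ y⟫ := by
        rw [← inner_neg_right]; congr 1; abel
      rw [h]; linarith
    have hsq : ‖PΘ y - z‖ ^ 2 ≤ ‖y - z‖ ^ 2 := by nlinarith [sq_nonneg ‖y - PΘ y‖]
    have := Real.sqrt_le_sqrt hsq
    rwa [Real.sqrt_sq (norm_nonneg _), Real.sqrt_sq (norm_nonneg _)] at this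
  -- iterates remain in Θ
  have θmem : ∀ k, θ k ∈ Θ := by
    intro k
    cases k with
    | zero => exact hθ0
    | succ n => rw [hθit n]; exact (hPΘ _).1
  -- a solution point
  obtain ⟨p, hp⟩ := hΘstarne
  have hpΘ : p ∈ Θ := by rw [hΘstar] at hp; exact hp.1
  have hCg : 0 ≤ Cg := le_trans (norm_nonneg _) (hgradbdd p hpΘ)
  -- key one-step inequality
  have key : ∀ k, 2 * α * (γg k * infDist (θ k) Θstar)
      ≤ ‖θ k - p‖ ^ 2 - ‖θ (k + 1) - p‖ ^ 2 + Cg ^ 2 * γg k ^ 2 := by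
    intro k
    set v := gradg (θ k) with hv
    have h1 : ‖θ (k + 1) - p‖ ≤ ‖θ k - γg k • v - p‖ := by
      rw [hθit k]; exact hproj _ p hpΘ
    have h1' : ‖θ (k + 1) - p‖ ^ 2 ≤ ‖θ k - γg k • v - p‖ ^ 2 :=
      pow_le_pow_left₀ (norm_nonneg _) h1 2
    have h2 : ‖θ k - γg k • v - p‖ ^ 2
        = ‖θ k - p‖ ^ 2 - 2 * (γg k * ⟪v, θ k - p⟫) + γg k ^ 2 * ‖v‖ ^ 2 := by
      have h : θ k - γg k • v - p = (θ k - p) - γg k • v := by abel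
      rw [h, norm_sub_sq_real, real_inner_smul_right, norm_smul,
        Real.norm_eq_abs, mul_pow, sq_abs, real_inner_comm]
    have h3 : α * infDist (θ k) Θstar ≤ ⟪v, θ k - p⟫ := by
      have hw := hws (θ k) (θmem k) p hp
      have hg := aux_grad_ineq hgconv (hgdiff (θ k)) (y := p)
      have h : ⟪v, θ k - p⟫ = - ⟪v, p - θ k⟫ := by
        rw [← inner_neg_right]; congr 1; abel
      rw [h]; linarith
    have h4 : ‖v‖ ^ 2 ≤ Cg ^ 2 := by
      have := hgradbdd (θ k) (θmem k)
      nlinarith [norm_nonneg v]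
    nlinarith [mul_le_mul_of_nonneg_left h3 (hγgnn k),
      mul_le_mul_of_nonneg_left h4 (sq_nonneg (γg k))]
  -- partial sums are bounded
  set S := ∑' k, (γg k) ^ 2 with hS
  apply summable_of_sum_range_le
    (c := (‖θ 0 - p‖ ^ 2 + Cg ^ 2 * S) / (2 * α))
    (fun k => mul_nonneg (hγgnn k) infDist_nonneg)
  intro K
  have h2a : (0:ℝ) < 2 * α := by linarith
  rw [le_div_iff₀ h2a]
  have hsum : ∑ k ∈ Finset.range K, 2 * α * (γg k * infDist (θ k) Θstar)
      ≤ ∑ k ∈ Finset.range K, (‖θ k - p‖ ^ 2 - ‖θ (k + 1) - p‖ ^ 2 + Cg ^ 2 * γg k ^ 2) :=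
    Finset.sum_le_sum fun k _ => key k
  rw [Finset.sum_add_distrib, Finset.sum_range_sub' (fun k => ‖θ k - p‖ ^ 2),
    ← Finset.mul_sum] at hsum
  have htail : ∑ k ∈ Finset.range K, Cg ^ 2 * γg k ^ 2 ≤ Cg ^ 2 * S := by
    rw [← Finset.mul_sum]
    exact mul_le_mul_of_nonneg_left (Summable.sum_le_tsum _ (fun k _ => sq_nonneg _) hγgsq)
      (sq_nonneg Cg)
  nlinarith [sq_nonneg ‖θ K - p‖, hsum, htail]
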